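/- arXiv:1110.1674 — 2 statements merged into one kernel-verified Lean document; each statement's English description precedes it below -/
import Mathlib

section
/- With F(z) = ∏_{i=1}^n (1 - z x_i)^{m/n} = ∑_k v_k z^k, one has ∑_{i=1}^n ∂v_k/∂x_i = (k - 1 - m)·v_{k-1} for all k ≥ 1. -/
open PowerSeries

/-- Generalized binomial coefficient `C(α, j) = α(α-1)⋯(α-j+1)/j!`. -/
noncomputable def gbinom (α : ℚ) (j : ℕ) : ℚ :=
  (∏ i ∈ Finset.range j, (α - i)) / (j.factorial : ℚ)

/-- The binomial series `(1 + w)^α = ∑_j C(α,j) w^j`, for a power series `w`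
(intended to have zero constant term, so that each coefficient is a finite sum). -/
noncomputable def fpow {R : Type*} [CommRing R] [Algebra ℚ R]
    (w : PowerSeries R) (α : ℚ) : PowerSeries R :=
  PowerSeries.mk fun k => ∑ j ∈ Finset.range (k + 1),
    gbinom α j • (PowerSeries.coeff (R := R) k (w ^ j))

lemma gbinom_zero (α : ℚ) : gbinom α 0 = 1 := by simp [gbinom]

lemma gbinom_succ (α : ℚ) (k : ℕ) :
    ((k : ℚ) + 1) * gbinom α (k + 1) = (α - k) * gbinom α k := by
  have h1 : ((k.factorial : ℚ)) ≠ 0 := Nat.cast_ne_zero.mpr k.factorial_ne_zero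
  have h2 : ((k : ℚ) + 1) ≠ 0 := by positivity
  rw [gbinom, gbinom, Finset.prod_range_succ, Nat.factorial_succ]
  push_cast
  field_simp

lemma coeff_fpow_neg {R : Type*} [CommRing R] [Algebra ℚ R] (a : R) (α : ℚ) (k : ℕ) :
    PowerSeries.coeff (R := R) k (fpow (-(PowerSeries.C (R := R) a * PowerSeries.X)) α)
      = gbinom α k • ((-a) ^ k) := by
  have hw : -(PowerSeries.C (R := R) a * PowerSeries.X) = PowerSeries.C (R := R) (-a) * PowerSeries.X := by
    rw [map_neg, neg_mul]
  have hp : ∀ j : ℕ, (PowerSeries.C (R := R) (-a) * PowerSeries.X) ^ j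
      = PowerSeries.C (R := R) ((-a) ^ j) * PowerSeries.X ^ j := by
    intro j; rw [mul_pow, map_pow]
  rw [fpow, coeff_mk, hw]
  rw [Finset.sum_eq_single k]
  · rw [hp, PowerSeries.coeff_C_mul, PowerSeries.coeff_X_pow, if_pos rfl, mul_one]
  · intro j _ hjk
    rw [hp, PowerSeries.coeff_C_mul, PowerSeries.coeff_X_pow,
      if_neg (fun h => hjk h.symm), mul_zero, smul_zero]
  · intro hk; exact absurd (Finset.self_mem_range_succ k) hk

/-- Generic product rule for a map satisfying the Leibniz rule. -/
lemma Dprod {M ι : Type*} [CommRing M] [DecidableEq ι] (D : M → M)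
    (hD : ∀ f g, D (f * g) = D f * g + f * D g) (s : Finset ι) (G : ι → M) :
    D (∏ j ∈ s, G j) = ∑ j ∈ s, D (G j) * ∏ l ∈ s.erase j, G l := by
  classical
  have h1 : D 1 = 0 := by
    have := hD 1 1
    simp only [mul_one, one_mul] at this
    exact (right_eq_add.mp this)
  induction s using Finset.induction_on with
  | empty => simpa using h1
  | @insert a s ha ih =>
      rw [Finset.prod_insert ha, hD, ih, Finset.sum_insert ha, Finset.erase_insert ha,
        Finset.mul_sum]
      congr 1
      refine Finset.sum_congr rfl fun j hj => ?_
      have hja : j ≠ a := fun h => ha (h ▸ hj)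
      rw [Finset.erase_insert_of_ne hja.symm,
        Finset.prod_insert (fun h => ha (Finset.mem_of_mem_erase h))]
      ring

/-- Coefficientwise partial derivative of a power series over a polynomial ring. -/
noncomputable def Dop {σ K : Type*} [CommRing K] (i : σ)
    (f : PowerSeries (MvPolynomial σ K)) : PowerSeries (MvPolynomial σ K) :=
  PowerSeries.mk fun k => MvPolynomial.pderiv i (PowerSeries.coeff k f)

lemma coeff_Dop {σ K : Type*} [CommRing K] (i : σ) (f : PowerSeries (MvPolynomial σ K)) (k : ℕ) :
    PowerSeries.coeff k (Dop i f) = MvPolynomial.pderiv i (PowerSeries.coeff k f) := by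
  rw [Dop, coeff_mk]

lemma Dop_mul {σ K : Type*} [CommRing K] (i : σ) (f g : PowerSeries (MvPolynomial σ K)) :
    Dop i (f * g) = Dop i f * g + f * Dop i g := by
  ext k
  simp only [coeff_Dop, map_add, PowerSeries.coeff_mul]
  have hms : MvPolynomial.pderiv i (∑ p ∈ Finset.HasAntidiagonal.antidiagonal k,
        PowerSeries.coeff (R := MvPolynomial σ K) p.1 f * PowerSeries.coeff (R := MvPolynomial σ K) p.2 g)
      = ∑ p ∈ Finset.HasAntidiagonal.antidiagonal k,
        MvPolynomial.pderiv i (PowerSeries.coeff (R := MvPolynomial σ K) p.1 f * PowerSeries.coeff (R := MvPolynomial σ K) p.2 g) :=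
    map_sum _ _ _
  rw [hms, Finset.sum_congr rfl (fun p _ => MvPolynomial.pderiv_mul),
    Finset.sum_add_distrib]

/-- The operator `z d/dz` on power series, coefficientwise `k • ·`. -/
noncomputable def Wop {R : Type*} [CommRing R] [Algebra ℚ R] (f : PowerSeries R) :
    PowerSeries R :=
  PowerSeries.mk fun k => (k : ℚ) • PowerSeries.coeff (R := R) k f

lemma Wop_mul {R : Type*} [CommRing R] [Algebra ℚ R] (f g : PowerSeries R) :
    Wop (f * g) = Wop f * g + f * Wop g := by
  ext k
  rw [map_add, Wop, coeff_mk, PowerSeries.coeff_mul, PowerSeries.coeff_mul,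
    PowerSeries.coeff_mul, Finset.smul_sum, ← Finset.sum_add_distrib]
  refine Finset.sum_congr rfl fun p hp => ?_
  rw [Finset.HasAntidiagonal.mem_antidiagonal] at hp
  rw [Wop, Wop, coeff_mk, coeff_mk, smul_mul_assoc, mul_smul_comm, ← add_smul]
  congr 1
  push_cast [← hp]
  ring

lemma pderiv_rat_smul {σ K : Type*} [CommRing K] [Algebra ℚ K] (i : σ) (q : ℚ)
    (p : MvPolynomial σ K) :
    MvPolynomial.pderiv i (q • p) = q • MvPolynomial.pderiv i p := by
  rw [Algebra.smul_def, Algebra.smul_def, IsScalarTower.algebraMap_apply ℚ K,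
    MvPolynomial.algebraMap_eq, MvPolynomial.pderiv_C_mul]

set_option maxHeartbeats 2000000 in
lemma coeff_Wop {R : Type*} [CommRing R] [Algebra ℚ R] (f : PowerSeries R) (k : ℕ) :
    PowerSeries.coeff (R := R) k (Wop f) = (k : ℚ) • PowerSeries.coeff (R := R) k f := by
  rw [Wop, coeff_mk]

/-- The factor `(1 - z x_j)^α`. -/
noncomputable def Gf (n : ℕ) (α : ℚ) (j : Fin n) : PowerSeries (MvPolynomial (Fin n) ℂ) :=
  fpow (-(PowerSeries.C (R := MvPolynomial (Fin n) ℂ) (MvPolynomial.X j) * PowerSeries.X)) α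

lemma coeff_Gf (n : ℕ) (α : ℚ) (j : Fin n) (k : ℕ) :
    PowerSeries.coeff k (Gf n α j)
      = gbinom α k • ((-MvPolynomial.X j : MvPolynomial (Fin n) ℂ) ^ k) :=
  coeff_fpow_neg _ _ _

/-- The auxiliary series `H j` with `Dop j (Gf j) = X * H j`. -/
noncomputable def Hf (n : ℕ) (α : ℚ) (j : Fin n) : PowerSeries (MvPolynomial (Fin n) ℂ) :=
  PowerSeries.mk fun k => ((k : ℚ) - α) • PowerSeries.coeff k (Gf n α j)

lemma coeff_Hf (n : ℕ) (α : ℚ) (j : Fin n) (k : ℕ) :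
    PowerSeries.coeff k (Hf n α j)
      = ((k : ℚ) - α) • PowerSeries.coeff k (Gf n α j) := by
  rw [Hf, coeff_mk]

lemma Dop_Gf_ne (n : ℕ) (α : ℚ) (i j : Fin n) (hij : i ≠ j) : Dop i (Gf n α j) = 0 := by
  ext k
  rw [coeff_Dop, coeff_Gf, pderiv_rat_smul, map_zero]
  rw [MvPolynomial.pderiv_pow]
  simp [MvPolynomial.pderiv_X_of_ne (Ne.symm hij)]

lemma Dop_Gf_eq (n : ℕ) (α : ℚ) (j : Fin n) :
    Dop j (Gf n α j) = PowerSeries.X * Hf n α j := by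
  ext k
  cases k with
  | zero =>
      rw [coeff_Dop, coeff_Gf, PowerSeries.coeff_zero_X_mul, pderiv_rat_smul]
      simp
  | succ K =>
      rw [coeff_Dop, coeff_Gf, PowerSeries.coeff_succ_X_mul, coeff_Hf, coeff_Gf,
        pderiv_rat_smul]
      have h1 : MvPolynomial.pderiv j ((-MvPolynomial.X j : MvPolynomial (Fin n) ℂ) ^ (K + 1))
          = ((K : ℚ) + 1) • (-((-MvPolynomial.X j : MvPolynomial (Fin n) ℂ) ^ K)) := by
        rw [MvPolynomial.pderiv_pow, map_neg, MvPolynomial.pderiv_X_self, Nat.add_sub_cancel,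
          mul_neg_one, ← nsmul_eq_mul, ← Nat.cast_smul_eq_nsmul ℚ, ← smul_neg]
        push_cast
        ring_nf
      have h3 : -(gbinom α (K + 1) * ((K : ℚ) + 1)) = ((K : ℚ) - α) * gbinom α K := by
        linear_combination -(gbinom_succ α K)
      rw [h1, smul_smul, smul_smul, smul_neg, ← neg_smul, h3]

set_option maxHeartbeats 2000000 in
/-- `∑ i, ∂v_k/∂x_i = (k - 1 - m) v_{k-1}` for `k ≥ 1`, where `v_k` are the
coefficients of `F(z) = ∏ i, (1 - z x_i)^{m/n}`. -/
theorem sum_pderiv_v (m n : ℕ) (hm : 0 < m) (hn : 0 < n)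
    (F : PowerSeries (MvPolynomial (Fin n) ℂ))
    (hF : F = ∏ j : Fin n,
      fpow (-(PowerSeries.C (R := MvPolynomial (Fin n) ℂ) (MvPolynomial.X j) * PowerSeries.X))
        ((m : ℚ) / n))
    (v : ℕ → MvPolynomial (Fin n) ℂ) (hv : ∀ k, v k = PowerSeries.coeff k F) :
    ∀ k : ℕ, 1 ≤ k →
      ∑ i : Fin n, MvPolynomial.pderiv i (v k) = ((k : ℚ) - 1 - m) • v (k - 1) := by
  classical
  intro k hk
  obtain ⟨K, rfl⟩ : ∃ K, k = K + 1 := ⟨k - 1, by omega⟩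
  set α : ℚ := (m : ℚ) / n with hα
  have hF' : F = ∏ j : Fin n, Gf n α j := hF
  have hWF : Wop F = ∑ j : Fin n, Wop (Gf n α j) * ∏ l ∈ Finset.univ.erase j, Gf n α l := by
    rw [hF']
    exact Dprod Wop Wop_mul Finset.univ (Gf n α)
  have hGP : ∀ j : Fin n, Gf n α j * ∏ l ∈ Finset.univ.erase j, Gf n α l = F := by
    intro j
    rw [hF']
    exact Finset.mul_prod_erase Finset.univ (Gf n α) (Finset.mem_univ j)
  have hsum : ∑ i : Fin n, Dop i F
      = PowerSeries.X * ∑ j : Fin n, Hf n α j * ∏ l ∈ Finset.univ.erase j, Gf n α l := by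
    calc ∑ i : Fin n, Dop i F
        = ∑ i : Fin n, ∑ j : Fin n, Dop i (Gf n α j) * ∏ l ∈ Finset.univ.erase j, Gf n α l := by
          refine Finset.sum_congr rfl fun i _ => ?_
          rw [hF']
          exact Dprod (Dop i) (Dop_mul i) Finset.univ (Gf n α)
      _ = ∑ j : Fin n, ∑ i : Fin n, Dop i (Gf n α j) * ∏ l ∈ Finset.univ.erase j, Gf n α l :=
          Finset.sum_comm
      _ = ∑ j : Fin n, (PowerSeries.X * Hf n α j) * ∏ l ∈ Finset.univ.erase j, Gf n α l := by
          refine Finset.sum_congr rfl fun j _ => ?_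
          rw [Finset.sum_eq_single j (fun i _ hij => by rw [Dop_Gf_ne n α i j hij, zero_mul])
            (fun h => absurd (Finset.mem_univ j) h), Dop_Gf_eq]
      _ = PowerSeries.X * ∑ j : Fin n, Hf n α j * ∏ l ∈ Finset.univ.erase j, Gf n α l := by
          rw [Finset.mul_sum]
          exact Finset.sum_congr rfl fun j _ => mul_assoc _ _ _
  have hL : ∑ i : Fin n, MvPolynomial.pderiv i (v (K + 1))
      = PowerSeries.coeff K (∑ j : Fin n, Hf n α j * ∏ l ∈ Finset.univ.erase j, Gf n α l) := by
    calc ∑ i : Fin n, MvPolynomial.pderiv i (v (K + 1))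
        = ∑ i : Fin n, PowerSeries.coeff (K + 1) (Dop i F) := by
          refine Finset.sum_congr rfl fun i _ => ?_
          rw [coeff_Dop, hv]
      _ = PowerSeries.coeff (K + 1) (∑ i : Fin n, Dop i F) := (map_sum _ _ _).symm
      _ = _ := by rw [hsum, PowerSeries.coeff_succ_X_mul]
  have hsplit :
      PowerSeries.coeff K (∑ j : Fin n, Hf n α j * ∏ l ∈ Finset.univ.erase j, Gf n α l)
      = PowerSeries.coeff K (∑ j : Fin n, Wop (Gf n α j) * ∏ l ∈ Finset.univ.erase j, Gf n α l)
        - α • ∑ j : Fin n,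
            PowerSeries.coeff K (Gf n α j * ∏ l ∈ Finset.univ.erase j, Gf n α l) := by
    rw [map_sum, map_sum, Finset.smul_sum, ← Finset.sum_sub_distrib]
    refine Finset.sum_congr rfl fun j _ => ?_
    rw [PowerSeries.coeff_mul, PowerSeries.coeff_mul, PowerSeries.coeff_mul, Finset.smul_sum,
      ← Finset.sum_sub_distrib]
    refine Finset.sum_congr rfl fun p _ => ?_
    rw [coeff_Hf, coeff_Wop, sub_smul, sub_mul]
    congr 1
    rw [smul_mul_assoc]
  have h1 : PowerSeries.coeff K
      (∑ j : Fin n, Wop (Gf n α j) * ∏ l ∈ Finset.univ.erase j, Gf n α l) = (K : ℚ) • v K := by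
    rw [← hWF, coeff_Wop, hv]
  have h2 : ∑ j : Fin n,
      PowerSeries.coeff K (Gf n α j * ∏ l ∈ Finset.univ.erase j, Gf n α l)
      = (n : ℚ) • v K := by
    rw [Finset.sum_congr rfl fun j _ => by rw [hGP j], Finset.sum_const, Finset.card_univ,
      Fintype.card_fin, hv, ← Nat.cast_smul_eq_nsmul ℚ]
  have hnα : α * (n : ℚ) = m := by
    rw [hα]
    field_simp
  rw [hL, hsplit, h1, h2, smul_smul, hnα, Nat.add_sub_cancel, ← sub_smul]
  congr 1
  push_cast
  ring
end

section
/- With f_i = Coef_m[B_i(z)] as above, for each 1 ≤ k ≤ n-1 the symmetric polynomial ∑_{i=1}^n x_i^k f_i equals -(n/m)(m+k)·v_{m+k} - ∑_{j=1}^{k-1} v_{m+j}·p_{k-j}, where p_r are power sums and v_r = Coef_r[∏_i (1-z x_i)^{m/n}]. Consequently v_{m+1},...,v_{m+n-1} lie in the ideal generated by f_1,...,f_n. -/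
open PowerSeries

section
variable {R : Type*} [CommRing R] [Algebra ℚ R]

lemma coeff_fpow (x : R) (α : ℚ) (k : ℕ) :
    coeff k (fpow (-(C x * X)) α) = gbinom α k • ((-x) ^ k) := by
  rw [fpow, coeff_mk]
  have h : ∀ j : ℕ, coeff k ((-(C x * X)) ^ j) = if j = k then (-x) ^ k else 0 := by
    intro j
    rw [show -(C x * X) = C (-x) * X by rw [map_neg]; ring, mul_pow, ← map_pow,
      coeff_C_mul, coeff_X_pow]
    by_cases hj : j = k
    · subst hj; simp
    · rw [if_neg hj, if_neg (fun h => hj h.symm), mul_zero]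
  simp only [h, smul_ite, smul_zero]
  rw [Finset.sum_ite_eq' (Finset.range (k+1)) k (fun j => gbinom α j • (-x)^k)]
  simp

lemma mul_natCast_smul (r : R) (c : ℕ) : r * (c : R) = (c : ℚ) • r := by
  rw [show (c : R) = algebraMap ℚ R (c : ℚ) from (map_natCast _ c).symm,
    mul_comm, ← Algebra.smul_def]

omit [Algebra ℚ R] in
lemma geom_mul (x : R) : (1 - C x * X) * PowerSeries.mk (fun k => x ^ k) = 1 := by
  ext k
  cases k with
  | zero => simp
  | succ k =>
    rw [sub_mul, one_mul, map_sub, mul_assoc, coeff_C_mul, coeff_succ_X_mul,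
      coeff_mk, coeff_mk]
    simp [pow_succ, mul_comm]

omit [Algebra ℚ R] in
lemma geom_inv (x : R) :
    invOfUnit (1 - C x * X) 1 = PowerSeries.mk fun k => x ^ k := by
  have hc : constantCoeff (1 - C x * X) = ((1 : Rˣ) : R) := by
    simp [map_sub, mul_comm]
  have h1 := geom_mul x
  have h2 := mul_invOfUnit (1 - C x * X) 1 hc
  calc invOfUnit (1 - C x * X) 1
      = ((1 - C x * X) * PowerSeries.mk (fun k => x ^ k)) * invOfUnit (1 - C x * X) 1 := by
        rw [h1, one_mul]
    _ = PowerSeries.mk (fun k => x ^ k) * ((1 - C x * X) * invOfUnit (1 - C x * X) 1) := by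
        ring
    _ = PowerSeries.mk (fun k => x ^ k) := by rw [h2, mul_one]

lemma fpow_deriv (x : R) (α : ℚ) :
    (1 - C x * X) * d⁄dX R (fpow (-(C x * X)) α) =
      (-α) • (C x * fpow (-(C x * X)) α) := by
  set g := fpow (-(C x * X)) α with hg
  ext k
  rw [sub_mul, one_mul, map_sub, PowerSeries.coeff_smul, mul_assoc, coeff_C_mul,
    coeff_C_mul]
  cases k with
  | zero =>
    rw [show ((coeff 0) (X * d⁄dX R g)) = 0 by
      rw [coeff_zero_eq_constantCoeff_apply, map_mul]; simp]
    rw [PowerSeries.coeff_derivative, hg, coeff_fpow, coeff_fpow]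
    have h1 : gbinom α 1 = α := by simp [gbinom]
    have h0 : gbinom α 0 = 1 := by simp [gbinom]
    simp only [h1, h0, Algebra.smul_def, map_neg, map_one]
    push_cast
    ring
  | succ k =>
    rw [coeff_succ_X_mul, PowerSeries.coeff_derivative, PowerSeries.coeff_derivative,
      hg]
    simp only [coeff_fpow]
    have hrel := congrArg (algebraMap ℚ R) (gbinom_succ α (k + 1))
    simp only [map_mul, map_sub, map_add, map_natCast, map_one] at hrel
    push_cast at hrel
    simp only [Algebra.smul_def, map_neg]
    push_cast
    linear_combination ((-x) ^ (k + 2)) * hrel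

lemma derivative_finset_prod {ι : Type*} [DecidableEq ι] (s : Finset ι) (g : ι → R⟦X⟧) :
    d⁄dX R (∏ i ∈ s, g i) = ∑ i ∈ s, d⁄dX R (g i) * ∏ l ∈ s.erase i, g l := by
  induction s using Finset.induction_on with
  | empty => simp
  | @insert a s ha ih =>
    rw [Finset.prod_insert ha, Derivation.leibniz, Finset.sum_insert ha,
      Finset.erase_insert ha, ih, smul_eq_mul, smul_eq_mul, Finset.mul_sum]
    rw [add_comm, mul_comm]
    congr 1
    refine Finset.sum_congr rfl fun i hi => ?_
    have hia : i ≠ a := fun h => ha (h ▸ hi)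
    rw [Finset.erase_insert_of_ne (Ne.symm hia), Finset.prod_insert (fun h => ha (Finset.mem_of_mem_erase h))]
    ring

end


/-- For `1 ≤ k ≤ n-1`:
`∑ i, x_iᵏ f_i = -(n/m)(m+k) v_{m+k} - ∑_{j=1}^{k-1} v_{m+j} p_{k-j}`,
and consequently `v_{m+1}, …, v_{m+n-1}` lie in the ideal `(f₁,…,fₙ)`. -/
theorem sum_pow_f_eq (m n : ℕ) (hm : 0 < m) (hn : 0 < n) (hmn : Nat.Coprime m n)
    (F : PowerSeries (MvPolynomial (Fin n) ℂ))
    (hF : F = ∏ j : Fin n,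
      fpow (-(PowerSeries.C (R := MvPolynomial (Fin n) ℂ) (MvPolynomial.X j) * PowerSeries.X))
        ((m : ℚ) / n))
    (v : ℕ → MvPolynomial (Fin n) ℂ) (hv : ∀ k, v k = PowerSeries.coeff k F)
    (p : ℕ → MvPolynomial (Fin n) ℂ) (hp : ∀ j, p j = ∑ i : Fin n, MvPolynomial.X i ^ j)
    (B : Fin n → PowerSeries (MvPolynomial (Fin n) ℂ))
    (hB : ∀ i, B i = PowerSeries.invOfUnit
      (1 - PowerSeries.C (R := MvPolynomial (Fin n) ℂ) (MvPolynomial.X i) * PowerSeries.X) 1 * F)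
    (f : Fin n → MvPolynomial (Fin n) ℂ) (hf : ∀ i, f i = PowerSeries.coeff m (B i)) :
    (∀ k : ℕ, 1 ≤ k → k ≤ n - 1 →
      ∑ i : Fin n, MvPolynomial.X i ^ k * f i =
        -((((n : ℚ) / m) * (m + k)) • v (m + k)) -
          ∑ j ∈ Finset.Icc 1 (k - 1), v (m + j) * p (k - j)) ∧
    (∀ j : ℕ, 1 ≤ j → j ≤ n - 1 → v (m + j) ∈ Ideal.span {g | ∃ i, g = f i}) := by
  classical
  have hα0 : ((m : ℚ) / n) ≠ 0 :=
    div_ne_zero (Nat.cast_ne_zero.mpr hm.ne') (Nat.cast_ne_zero.mpr hn.ne')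
  set E : PowerSeries (MvPolynomial (Fin n) ℂ) := PowerSeries.mk (fun r => p (r + 1)) with hE
  -- Step: expansion of f i
  have hfi : ∀ i, f i = ∑ j ∈ Finset.range (m + 1), MvPolynomial.X i ^ j * v (m - j) := by
    intro i
    rw [hf, hB, geom_inv, coeff_mul, Finset.Nat.sum_antidiagonal_eq_sum_range_succ_mk]
    exact Finset.sum_congr rfl fun j _ => by rw [coeff_mk, hv]
  -- Step: power sums expansion
  have hS : ∀ k : ℕ, ∑ i : Fin n, MvPolynomial.X i ^ k * f i
      = ∑ j ∈ Finset.range (m + 1), v (m - j) * p (j + k) := by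
    intro k
    calc ∑ i : Fin n, MvPolynomial.X i ^ k * f i
        = ∑ i : Fin n, ∑ j ∈ Finset.range (m + 1), v (m - j) * MvPolynomial.X i ^ (j + k) := by
          refine Finset.sum_congr rfl fun i _ => ?_
          rw [hfi, Finset.mul_sum]
          exact Finset.sum_congr rfl fun j _ => by rw [pow_add]; ring
      _ = ∑ j ∈ Finset.range (m + 1), ∑ i : Fin n, v (m - j) * MvPolynomial.X i ^ (j + k) :=
          Finset.sum_comm
      _ = ∑ j ∈ Finset.range (m + 1), v (m - j) * p (j + k) := by
          refine Finset.sum_congr rfl fun j _ => ?_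
          rw [← Finset.mul_sum, hp]
  -- Step: derivative of F
  have hDF : d⁄dX (MvPolynomial (Fin n) ℂ) F = (-((m : ℚ) / n)) • (E * F) := by
    have hEeq : (∑ jj : Fin n, PowerSeries.C (R := MvPolynomial (Fin n) ℂ) (MvPolynomial.X jj)
        * PowerSeries.mk (fun k => MvPolynomial.X jj ^ k)) = E := by
      refine PowerSeries.ext fun r => ?_
      simp only [hE, map_sum, coeff_C_mul, coeff_mk, hp]
      exact Finset.sum_congr rfl fun jj _ => by rw [pow_succ, mul_comm]
    have hg : ∀ jj : Fin n,
        d⁄dX (MvPolynomial (Fin n) ℂ)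
          (fpow (-(PowerSeries.C (R := MvPolynomial (Fin n) ℂ) (MvPolynomial.X jj) * X)) ((m : ℚ)/n))
          = (-((m : ℚ)/n)) • (PowerSeries.C (R := MvPolynomial (Fin n) ℂ) (MvPolynomial.X jj)
              * PowerSeries.mk (fun k => MvPolynomial.X jj ^ k)
              * fpow (-(PowerSeries.C (R := MvPolynomial (Fin n) ℂ) (MvPolynomial.X jj) * X)) ((m : ℚ)/n)) := by
      intro jj
      have h1 := fpow_deriv (R := MvPolynomial (Fin n) ℂ) (MvPolynomial.X jj) ((m : ℚ)/n)
      have h2 := geom_mul (R := MvPolynomial (Fin n) ℂ) (MvPolynomial.X jj)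
      calc d⁄dX (MvPolynomial (Fin n) ℂ)
            (fpow (-(PowerSeries.C (R := MvPolynomial (Fin n) ℂ) (MvPolynomial.X jj) * X)) ((m : ℚ)/n))
          = (PowerSeries.mk (fun k => MvPolynomial.X jj ^ k)
              * ((1 - PowerSeries.C (R := MvPolynomial (Fin n) ℂ) (MvPolynomial.X jj) * X)
                * d⁄dX (MvPolynomial (Fin n) ℂ)
                  (fpow (-(PowerSeries.C (R := MvPolynomial (Fin n) ℂ) (MvPolynomial.X jj) * X)) ((m : ℚ)/n)))) := by
            rw [← mul_assoc, mul_comm (PowerSeries.mk fun k => MvPolynomial.X jj ^ k), h2, one_mul]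
        _ = (PowerSeries.mk (fun k => MvPolynomial.X jj ^ k)
              * ((-((m : ℚ)/n)) • (PowerSeries.C (R := MvPolynomial (Fin n) ℂ) (MvPolynomial.X jj)
                * fpow (-(PowerSeries.C (R := MvPolynomial (Fin n) ℂ) (MvPolynomial.X jj) * X)) ((m : ℚ)/n)))) := by
            rw [h1]
        _ = (-((m : ℚ)/n)) • (PowerSeries.C (R := MvPolynomial (Fin n) ℂ) (MvPolynomial.X jj)
              * PowerSeries.mk (fun k => MvPolynomial.X jj ^ k)
              * fpow (-(PowerSeries.C (R := MvPolynomial (Fin n) ℂ) (MvPolynomial.X jj) * X)) ((m : ℚ)/n)) := by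
            rw [mul_smul_comm]
            refine congrArg _ ?_
            ring
    rw [hF, derivative_finset_prod]
    calc ∑ jj : Fin n, d⁄dX (MvPolynomial (Fin n) ℂ)
            (fpow (-(PowerSeries.C (R := MvPolynomial (Fin n) ℂ) (MvPolynomial.X jj) * X)) ((m : ℚ)/n))
          * ∏ l ∈ Finset.univ.erase jj,
            fpow (-(PowerSeries.C (R := MvPolynomial (Fin n) ℂ) (MvPolynomial.X l) * X)) ((m : ℚ)/n)
        = ∑ jj : Fin n, (-((m : ℚ)/n)) • (PowerSeries.C (R := MvPolynomial (Fin n) ℂ) (MvPolynomial.X jj)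
            * PowerSeries.mk (fun k => MvPolynomial.X jj ^ k)
            * ∏ l : Fin n,
              fpow (-(PowerSeries.C (R := MvPolynomial (Fin n) ℂ) (MvPolynomial.X l) * X)) ((m : ℚ)/n)) := by
          refine Finset.sum_congr rfl fun jj _ => ?_
          rw [hg jj, smul_mul_assoc]
          refine congrArg _ ?_
          rw [← Finset.mul_prod_erase Finset.univ
            (fun l => fpow (-(PowerSeries.C (R := MvPolynomial (Fin n) ℂ) (MvPolynomial.X l) * X))
              ((m : ℚ)/n)) (Finset.mem_univ jj)]
          ring
      _ = (-((m : ℚ)/n)) • (E * ∏ l : Fin n,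
            fpow (-(PowerSeries.C (R := MvPolynomial (Fin n) ℂ) (MvPolynomial.X l) * X)) ((m : ℚ)/n)) := by
          rw [← Finset.smul_sum, ← Finset.sum_mul, hEeq]
  -- Step: coefficient recursion
  have hrec : ∀ r : ℕ, ((r : ℚ) + 1) • v (r + 1)
      = (-((m : ℚ) / n)) • ∑ i ∈ Finset.range (r + 1), p (i + 1) * v (r - i) := by
    intro r
    have h := congrArg (PowerSeries.coeff (R := MvPolynomial (Fin n) ℂ) r) hDF
    rw [PowerSeries.coeff_derivative, PowerSeries.coeff_smul, coeff_mul,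
      Finset.Nat.sum_antidiagonal_eq_sum_range_succ_mk] at h
    rw [← hv, ← Nat.cast_add_one, mul_natCast_smul] at h
    push_cast at h
    rw [h]
    congr 1
    exact Finset.sum_congr rfl fun i hi => by rw [hE, coeff_mk, ← hv]
  -- Step: main identity (for all k ≥ 1)
  have hmain : ∀ k : ℕ, 1 ≤ k →
      ∑ i : Fin n, MvPolynomial.X i ^ k * f i =
        -((((n : ℚ) / m) * ((m : ℚ) + (k : ℚ))) • v (m + k)) -
          ∑ j ∈ Finset.Icc 1 (k - 1), v (m + j) * p (k - j) := by
    intro k hk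
    have hfull := hrec (m + k - 1)
    have e1 : m + k - 1 + 1 = m + k := by omega
    rw [e1] at hfull
    have e2 : ((m + k - 1 : ℕ) : ℚ) + 1 = ((m : ℚ) + k) := by
      push_cast [Nat.cast_sub (show 1 ≤ m + k by omega)]
      ring
    rw [e2] at hfull
    have hFull : (∑ i ∈ Finset.range (m + k), p (i + 1) * v (m + k - 1 - i))
        = -((((n : ℚ) / m) * ((m : ℚ) + k)) • v (m + k)) := by
      have h3 := congrArg (fun z : MvPolynomial (Fin n) ℂ => (-((n : ℚ) / m)) • z) hfull
      simp only [smul_smul] at h3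
      have c1 : (-((n : ℚ) / m)) * (-((m : ℚ) / n)) = 1 := by
        field_simp
      rw [c1, one_smul] at h3
      rw [← h3, neg_mul, neg_smul]
    have hsplit : (∑ i ∈ Finset.range (k - 1), p (i + 1) * v (m + k - 1 - i))
        + (∑ i ∈ Finset.Ico (k - 1) (m + k), p (i + 1) * v (m + k - 1 - i))
        = ∑ i ∈ Finset.range (m + k), p (i + 1) * v (m + k - 1 - i) := by
      rw [Finset.range_eq_Ico, Finset.range_eq_Ico]
      exact Finset.sum_Ico_consecutive (fun i => p (i + 1) * v (m + k - 1 - i)) (show 0 ≤ k - 1 by omega) (show k - 1 ≤ m + k by omega)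
    have hIco : (∑ i ∈ Finset.Ico (k - 1) (m + k), p (i + 1) * v (m + k - 1 - i))
        = ∑ j ∈ Finset.range (m + 1), v (m - j) * p (j + k) := by
      rw [Finset.sum_Ico_eq_sum_range, show m + k - (k - 1) = m + 1 by omega]
      refine Finset.sum_congr rfl fun j hj => ?_
      rw [Finset.mem_range] at hj
      rw [show k - 1 + j + 1 = j + k by omega,
        show m + k - 1 - (k - 1 + j) = m - j by omega, mul_comm]
    have htail : (∑ i ∈ Finset.range (k - 1), p (i + 1) * v (m + k - 1 - i))
        = ∑ j ∈ Finset.Icc 1 (k - 1), v (m + j) * p (k - j) := by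
      rw [← Finset.sum_range_reflect (fun i => p (i + 1) * v (m + k - 1 - i)) (k - 1)]
      rw [show Finset.Icc 1 (k - 1) = Finset.Ico 1 ((k - 1) + 1) from
        (Finset.Ico_add_one_right_eq_Icc 1 (k - 1)), Finset.sum_Ico_eq_sum_range,
        show k - 1 + 1 - 1 = k - 1 by omega]
      refine Finset.sum_congr rfl fun j hj => ?_
      rw [Finset.mem_range] at hj
      rw [show k - 1 - 1 - j + 1 = k - (1 + j) by omega,
        show m + k - 1 - (k - 1 - 1 - j) = m + (1 + j) by omega, mul_comm]
    rw [hS, ← hIco, ← htail, ← hFull, ← hsplit]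
    ring
  refine ⟨fun k hk1 _ => hmain k hk1, ?_⟩
  have key : ∀ j : ℕ, 1 ≤ j → j ≤ n - 1 →
      v (m + j) ∈ Ideal.span {g | ∃ i, g = f i} := by
    intro j
    induction j using Nat.strong_induction_on with
    | _ j ih =>
      intro hj1 hj2
      have hfI : ∀ i, f i ∈ Ideal.span {g | ∃ i, g = f i} :=
        fun i => Ideal.subset_span ⟨i, rfl⟩
      have hsum : (∑ i : Fin n, MvPolynomial.X i ^ j * f i) ∈ Ideal.span {g | ∃ i, g = f i} :=
        Ideal.sum_mem _ fun i _ => Ideal.mul_mem_left _ _ (hfI i)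
      have htail : (∑ l ∈ Finset.Icc 1 (j - 1), v (m + l) * p (j - l))
          ∈ Ideal.span {g | ∃ i, g = f i} := by
        refine Ideal.sum_mem _ fun l hl => ?_
        rw [Finset.mem_Icc] at hl
        exact Ideal.mul_mem_right _ _ (ih l (by omega) hl.1 (by omega))
      have hc : ((n : ℚ) / m * ((m : ℚ) + j)) ≠ 0 := by
        have h1 : (0 : ℚ) < n := by exact_mod_cast hn
        have h2 : (0 : ℚ) < m := by exact_mod_cast hm
        positivity
      have hv' : ((n : ℚ) / m * ((m : ℚ) + j)) • v (m + j)
          = -(∑ i : Fin n, MvPolynomial.X i ^ j * f i)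
            - ∑ l ∈ Finset.Icc 1 (j - 1), v (m + l) * p (j - l) := by
        rw [hmain j hj1]
        abel
      have hrw : v (m + j) = (((n : ℚ) / m * ((m : ℚ) + j))⁻¹
          * ((n : ℚ) / m * ((m : ℚ) + j))) • v (m + j) := by
        rw [inv_mul_cancel₀ hc, one_smul]
      rw [hrw, mul_smul, hv', Algebra.smul_def]
      exact Ideal.mul_mem_left _ _
        (Ideal.sub_mem _ (neg_mem hsum) htail)
  exact key
end
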